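/- For every ε > 0 and every x < 0: ln(G_ε(x)) < ln ε + x/ε; the derivative of x ↦ ln(G_ε(x)) at x satisfies (ln G_ε)'(x) > 1/(2ε); and the second derivative satisfies −(2/ε²)·exp(x/ε) < (ln G_ε)''(x) < 0. -/

import Mathlib

/-- For `ε > 0`, the smooth approximation `G_ε(x) = ε · ln(1 + exp(x/ε))` of `max(x, 0)`. -/
noncomputable def Geps (ε x : ℝ) : ℝ := ε * Real.log (1 + Real.exp (x / ε))

open Real


-- basic derivative lemmas
lemma hasDerivAt_geps (ε : ℝ) (hε : 0 < ε) (x : ℝ) :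
    HasDerivAt (fun z => Geps ε z) (Real.exp (x / ε) / (1 + Real.exp (x / ε))) x := by
  have h1 : HasDerivAt (fun z : ℝ => z / ε) (1 / ε) x := by
    simpa using (hasDerivAt_id x).div_const ε
  have h2 : HasDerivAt (fun z : ℝ => Real.exp (z / ε)) (Real.exp (x / ε) * (1 / ε)) x :=
    h1.exp
  have h3 : HasDerivAt (fun z : ℝ => 1 + Real.exp (z / ε)) (Real.exp (x / ε) * (1 / ε)) x :=
    h2.const_add 1
  have hpos : (1 : ℝ) + Real.exp (x / ε) ≠ 0 := by positivity
  have h4 := (h3.log hpos).const_mul ε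
  refine h4.congr_deriv ?_
  field_simp

lemma geps_pos (ε : ℝ) (hε : 0 < ε) (x : ℝ) : 0 < Geps ε x := by
  have : 0 < Real.log (1 + Real.exp (x / ε)) :=
    Real.log_pos (by nlinarith [Real.exp_pos (x / ε)])
  exact mul_pos hε this

lemma hasDerivAt_log_geps (ε : ℝ) (hε : 0 < ε) (x : ℝ) :
    HasDerivAt (fun z => Real.log (Geps ε z))
      (Real.exp (x / ε) / ((1 + Real.exp (x / ε)) * Geps ε x)) x := by
  have h := (hasDerivAt_geps ε hε x).log (geps_pos ε hε x).ne'
  convert h using 1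
  rw [div_div]

lemma deriv_log_geps (ε : ℝ) (hε : 0 < ε) :
    deriv (fun z : ℝ => Real.log (Geps ε z)) =
      fun x => Real.exp (x / ε) / ((1 + Real.exp (x / ε)) * Geps ε x) := by
  funext x
  exact (hasDerivAt_log_geps ε hε x).deriv

lemma hasDerivAt_phi (ε : ℝ) (hε : 0 < ε) (x : ℝ) :
    HasDerivAt (fun z : ℝ => Real.exp (z / ε) / ((1 + Real.exp (z / ε)) * Geps ε z))
      (Real.exp (x / ε) * (Real.log (1 + Real.exp (x / ε)) - Real.exp (x / ε)) /
        (ε ^ 2 * ((1 + Real.exp (x / ε)) ^ 2 * Real.log (1 + Real.exp (x / ε)) ^ 2))) x := by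
  set u := Real.exp (x / ε) with hu
  have h1 : HasDerivAt (fun z : ℝ => z / ε) (1 / ε) x := by
    simpa using (hasDerivAt_id x).div_const ε
  have h2 : HasDerivAt (fun z : ℝ => Real.exp (z / ε)) (u * (1 / ε)) x := h1.exp
  have h3 : HasDerivAt (fun z : ℝ => 1 + Real.exp (z / ε)) (u * (1 / ε)) x := h2.const_add 1
  have hG := hasDerivAt_geps ε hε x
  have hden : HasDerivAt (fun z : ℝ => (1 + Real.exp (z / ε)) * Geps ε z)
      (u * (1 / ε) * Geps ε x + (1 + u) * (u / (1 + u))) x := h3.mul hG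
  have hupos : 0 < u := Real.exp_pos _
  have hdenne : (1 + u) * Geps ε x ≠ 0 := by
    have := geps_pos ε hε x; positivity
  have h := h2.div hden hdenne
  refine h.congr_deriv ?_
  have hG' : Geps ε x = ε * Real.log (1 + u) := rfl
  have hL : 0 < Real.log (1 + u) := Real.log_pos (by nlinarith)
  rw [hG']
  field_simp
  ring

/-- For every `ε > 0` and every `x < 0`: `ln(G_ε(x)) < ln ε + x/ε`;
the derivative of `x ↦ ln(G_ε(x))` at `x` satisfies `(ln G_ε)'(x) > 1/(2ε)`; and the
second derivative satisfies `−(2/ε²)·exp(x/ε) < (ln G_ε)''(x) < 0`. -/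
theorem log_geps_bounds_neg (ε : ℝ) (hε : 0 < ε) (x : ℝ) (hx : x < 0) :
    Real.log (Geps ε x) < Real.log ε + x / ε ∧
      1 / (2 * ε) < deriv (fun z : ℝ => Real.log (Geps ε z)) x ∧
      -(2 / ε ^ 2) * Real.exp (x / ε) < deriv (deriv (fun z : ℝ => Real.log (Geps ε z))) x ∧
      deriv (deriv (fun z : ℝ => Real.log (Geps ε z))) x < 0 := by
  have hd1 := (hasDerivAt_log_geps ε hε x).deriv
  have hd2 : deriv (deriv (fun z : ℝ => Real.log (Geps ε z))) x =
      Real.exp (x / ε) * (Real.log (1 + Real.exp (x / ε)) - Real.exp (x / ε)) /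
        (ε ^ 2 * ((1 + Real.exp (x / ε)) ^ 2 * Real.log (1 + Real.exp (x / ε)) ^ 2)) := by
    rw [deriv_log_geps ε hε]
    exact (hasDerivAt_phi ε hε x).deriv
  set u := Real.exp (x / ε) with hu
  set L := Real.log (1 + u) with hLdef
  have hupos : 0 < u := Real.exp_pos _
  have hu1 : u < 1 := by
    rw [hu, Real.exp_lt_one_iff]
    exact div_neg_of_neg_of_pos hx hε
  have hLpos : 0 < L := Real.log_pos (by linarith)
  have hLu : L < u := by
    have := Real.log_lt_sub_one_of_pos (by linarith : (0:ℝ) < 1 + u) (by linarith)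
    rw [← hLdef] at this; linarith
  have hLlow : u < (1 + u) * L := by
    have hne : -L ≠ 0 := by linarith
    have h := Real.add_one_lt_exp hne
    rw [Real.exp_neg, hLdef, Real.exp_log (by linarith : (0:ℝ) < 1 + u)] at h
    rw [← hLdef] at h
    have h1u : (0:ℝ) < 1 + u := by linarith
    have h2 := mul_lt_mul_of_pos_right h h1u
    rw [inv_mul_cancel₀ h1u.ne'] at h2
    nlinarith
  have hGL : Geps ε x = ε * L := rfl
  refine ⟨?_, ?_, ?_, ?_⟩
  · rw [hGL, Real.log_mul (ne_of_gt hε) (ne_of_gt hLpos)]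
    have : Real.log L < Real.log u := Real.log_lt_log hLpos hLu
    rw [hu, Real.log_exp] at this
    linarith
  · rw [hd1, hGL]
    rw [div_lt_div_iff₀ (by positivity) (by positivity)]
    have h1 : (1 + u) * L < 2 * u := by nlinarith
    nlinarith [mul_lt_mul_of_pos_right h1 hε]
  · rw [hd2]
    rw [lt_div_iff₀ (by positivity)]
    have heq : -(2 / ε ^ 2) * u * (ε ^ 2 * ((1 + u) ^ 2 * L ^ 2)) =
        -2 * u * ((1 + u) ^ 2 * L ^ 2) := by field_simp
    rw [heq]
    have hsq : u * u < ((1 + u) * L) * ((1 + u) * L) :=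
      mul_self_lt_mul_self hupos.le hLlow
    have ha : u - L < u * L := by nlinarith
    nlinarith [mul_lt_mul_of_pos_left hsq hupos, mul_lt_mul_of_pos_left ha hupos,
      mul_lt_mul_of_pos_left (mul_lt_mul_of_pos_left hLu hupos) hupos]
  · rw [hd2]
    apply div_neg_of_neg_of_pos
    · nlinarith
    · positivity
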